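/- (Necessity in Theorem 1.) Let r ≥ 1 and let Θ ⊆ ℝ^r be a nonempty open convex cone. For each θ ∈ Θ let f_θ be a probability mass function on ℕ whose pgf Φ(t, θ) = Σ_n f_θ(n) t^n extends to a function of t that is C^∞ on (−1, 1] with the i-th one-sided derivative of log Φ(·, θ) at t = 1 equal to θ_i for i = 1, …, r (so the family is parameterized by its first r factorial cumulants), and assume θ ↦ Φ(t, θ) is continuous for each fixed t. Suppose the family is closed under addition, i.e., f_{θ₁} * f_{θ₂} = f_{θ₁+θ₂} for all θ₁, θ₂ ∈ Θ, and closed under binomial subsampling, i.e., for every θ ∈ Θ and p ∈ (0,1] there exists θ' ∈ Θ with T_p f_θ = f_{θ'}. Then Φ(t, θ) = exp(Σ_{i=1}^r θ_i (t−1)^i / i!) for all θ ∈ Θ and t ∈ (−1, 1]; that is, every member of the family is an r-th order univariate Hermite distribution. -/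

import Mathlib

open scoped BigOperators ENNReal
open Set Filter

set_option linter.unusedSectionVars false
set_option maxHeartbeats 1000000

/-- `f` is a probability mass function on `ℕ`. -/
def IsPMF (f : ℕ → ℝ) : Prop := (∀ n, 0 ≤ f n) ∧ HasSum f 1

/-- The binomial subsampling (independent `p`-thinning) of `f`:
`(T_p f)(m) = ∑_{n ≥ m} f(n) * C(n,m) * p^m * (1-p)^(n-m)` (written with `n = m + k`). -/
noncomputable def thin (p : ℝ) (f : ℕ → ℝ) : ℕ → ℝ :=
  fun m => ∑' k : ℕ, f (m + k) * ((m + k).choose m : ℝ) * p ^ m * (1 - p) ^ k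

lemma IsPMF.le_one {f : ℕ → ℝ} (hf : IsPMF f) (n : ℕ) : f n ≤ 1 := by
  calc f n ≤ ∑' m, f m := Summable.le_tsum hf.2.summable n (fun m _ => hf.1 m)
  _ = 1 := hf.2.tsum_eq




lemma pgf_norm_summable {f : ℕ → ℝ} (hf : IsPMF f) {t : ℝ} (ht : |t| ≤ 1) :
    Summable fun n => ‖f n * t ^ n‖ := by
  apply Summable.of_nonneg_of_le (fun n => norm_nonneg _) _ hf.2.summable
  intro n
  rw [norm_mul, norm_pow]
  calc ‖f n‖ * ‖t‖ ^ n ≤ ‖f n‖ * 1 := by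
        apply mul_le_mul_of_nonneg_left _ (norm_nonneg _)
        exact pow_le_one₀ (norm_nonneg t) ht
  _ = f n := by rw [mul_one, Real.norm_eq_abs, abs_of_nonneg (hf.1 n)]

lemma pgf_summable {f : ℕ → ℝ} (hf : IsPMF f) {t : ℝ} (ht : |t| ≤ 1) :
    Summable fun n => f n * t ^ n :=
  (pgf_norm_summable hf ht).of_norm

lemma pgf_pos {f : ℕ → ℝ} (hf : IsPMF f) {t : ℝ} (ht : 0 < t) (ht1 : t ≤ 1) :
    0 < ∑' n, f n * t ^ n := by
  obtain ⟨n, hn⟩ : ∃ n, 0 < f n := by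
    by_contra h
    push_neg at h
    have hz : ∀ n, f n = 0 := fun n => le_antisymm (h n) (hf.1 n)
    have h1 := hf.2.tsum_eq
    rw [funext hz] at h1
    simp at h1
  have hsum := pgf_summable hf (by rw [abs_of_pos ht]; exact ht1)
  calc (0:ℝ) < f n * t ^ n := mul_pos hn (pow_pos ht n)
  _ ≤ ∑' m, f m * t ^ m := Summable.le_tsum hsum n (fun m _ => mul_nonneg (hf.1 m) (le_of_lt (pow_pos ht m)))

lemma conv_pgf {f₁ f₂ : ℕ → ℝ} (hf₁ : IsPMF f₁) (hf₂ : IsPMF f₂) {t : ℝ} (ht : |t| ≤ 1) :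
    ∑' n : ℕ, (∑ j ∈ Finset.range (n + 1), f₁ j * f₂ (n - j)) * t ^ n
      = (∑' n, f₁ n * t ^ n) * (∑' n, f₂ n * t ^ n) := by
  rw [tsum_mul_tsum_eq_tsum_sum_range_of_summable_norm (pgf_norm_summable hf₁ ht)
    (pgf_norm_summable hf₂ ht)]
  congr 1
  funext n
  rw [Finset.sum_mul]
  apply Finset.sum_congr rfl
  intro j hj
  have hj' : j ≤ n := Nat.lt_succ_iff.mp (Finset.mem_range.mp hj)
  have : t ^ n = t ^ j * t ^ (n - j) := by rw [← pow_add]; congr 1; omega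
  rw [this]; ring






lemma thin_term_nonneg {f : ℕ → ℝ} (hf : IsPMF f) {p : ℝ} (hp : 0 < p) (hp1 : p ≤ 1)
    (m k : ℕ) : 0 ≤ f (m + k) * ((m + k).choose m : ℝ) * p ^ m * (1 - p) ^ k := by
  have h1 : (0:ℝ) ≤ 1 - p := by linarith
  have := hf.1 (m + k)
  positivity

lemma thin_summable {f : ℕ → ℝ} (hf : IsPMF f) {p : ℝ} (hp : 0 < p) (hp1 : p ≤ 1) (m : ℕ) :
    Summable fun k => f (m + k) * ((m + k).choose m : ℝ) * p ^ m * (1 - p) ^ k := by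
  have hq0 : (0:ℝ) ≤ 1 - p := by linarith
  have hq1 : ‖(1 - p : ℝ)‖ < 1 := by rw [Real.norm_eq_abs, abs_of_nonneg hq0]; linarith
  have hsum : Summable fun k : ℕ =>
      ((m+1:ℝ))^m * ((2:ℝ)^m * ((k:ℝ)^m * (1-p)^k) + (1-p)^k) := by
    apply Summable.mul_left
    exact ((summable_pow_mul_geometric_of_norm_lt_one m hq1).mul_left _).add
      (summable_geometric_of_norm_lt_one hq1)
  apply Summable.of_nonneg_of_le (thin_term_nonneg hf hp hp1 m) _ hsum
  intro k
  have hC : ((m + k).choose m : ℝ) ≤ ((m+1:ℝ))^m * ((k:ℝ)^m * (2:ℝ)^m + 1) := by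
    have h1 : ((m + k).choose m : ℝ) ≤ ((m + k : ℕ) : ℝ) ^ m := by
      exact_mod_cast Nat.choose_le_pow (m + k) m
    have h2 : ((m + k : ℕ) : ℝ) ^ m ≤ ((m+1:ℝ) * (k+1:ℝ)) ^ m := by
      apply pow_le_pow_left₀ (by positivity)
      push_cast; nlinarith [Nat.cast_nonneg (α := ℝ) m, Nat.cast_nonneg (α := ℝ) k]
    have h3 : ((k:ℝ)+1) ^ m ≤ (2:ℝ)^m * (k:ℝ)^m + 1 := by
      rcases Nat.eq_zero_or_pos k with rfl | hk
      · simp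
      · have : ((k:ℝ)+1) ≤ 2 * (k:ℝ) := by
          have : (1:ℝ) ≤ (k:ℝ) := by exact_mod_cast hk
          linarith
        calc ((k:ℝ)+1)^m ≤ (2*(k:ℝ))^m := pow_le_pow_left₀ (by positivity) this m
        _ = 2^m * (k:ℝ)^m := mul_pow 2 _ m
        _ ≤ 2^m * (k:ℝ)^m + 1 := by linarith
    calc ((m + k).choose m : ℝ) ≤ ((m+1:ℝ) * ((k:ℝ)+1)) ^ m := le_trans h1 (by push_cast at h2 ⊢; exact h2)
    _ = (m+1:ℝ)^m * ((k:ℝ)+1)^m := mul_pow _ _ m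
    _ ≤ (m+1:ℝ)^m * ((2:ℝ)^m * (k:ℝ)^m + 1) := by
        apply mul_le_mul_of_nonneg_left h3 (by positivity)
    _ = (m+1:ℝ)^m * ((k:ℝ)^m * (2:ℝ)^m + 1) := by ring
  calc f (m + k) * ((m + k).choose m : ℝ) * p ^ m * (1 - p) ^ k
      ≤ 1 * ((m+1:ℝ)^m * ((k:ℝ)^m * (2:ℝ)^m + 1)) * 1 * (1 - p) ^ k := by
        apply mul_le_mul_of_nonneg_right _ (by positivity)
        apply mul_le_mul
        · apply mul_le_mul (hf.le_one _) hC (by positivity) (by norm_num)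
        · exact pow_le_one₀ (le_of_lt hp) hp1
        · positivity
        · positivity
  _ = (m+1:ℝ)^m * ((2:ℝ)^m * ((k:ℝ)^m * (1-p)^k) + (1-p)^k) := by ring

lemma thin_nonneg {f : ℕ → ℝ} (hf : IsPMF f) {p : ℝ} (hp : 0 < p) (hp1 : p ≤ 1) (m : ℕ) :
    0 ≤ thin p f m :=
  tsum_nonneg (thin_term_nonneg hf hp hp1 m)

lemma thin_pgf {f : ℕ → ℝ} (hf : IsPMF f) {p t : ℝ} (hp : 0 < p) (hp1 : p ≤ 1)
    (ht : 0 < t) (ht1 : t ≤ 1) :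
    Summable (fun m => thin p f m * t ^ m) ∧
    ∑' m, thin p f m * t ^ m = ∑' n, f n * (1 - p + p * t) ^ n := by
  have hq0 : (0:ℝ) ≤ 1 - p := by linarith
  have hs0 : 0 < 1 - p + p * t := by nlinarith
  have hs1 : 1 - p + p * t ≤ 1 := by nlinarith
  set G : ℕ → ℕ → ℝ := fun m n => f n * (n.choose m : ℝ) * (p * t) ^ m * (1 - p) ^ (n - m)
    with hG
  have hGnonneg : ∀ m n, 0 ≤ G m n := by
    intro m n
    have := hf.1 n
    positivity
  have hterm : ∀ m, (fun k => f (m + k) * ((m + k).choose m : ℝ) * p ^ m * (1 - p) ^ k * t ^ m)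
      = fun k => G m (m + k) := by
    intro m; funext k
    rw [hG]; simp only [Nat.add_sub_cancel_left]
    ring
  -- `ofReal` of each summand of the lhs
  have hof : ∀ m, ENNReal.ofReal (thin p f m * t ^ m) = ∑' k, ENNReal.ofReal (G m (m + k)) := by
    intro m
    have hsum : Summable fun k => f (m + k) * ((m + k).choose m : ℝ) * p ^ m * (1 - p) ^ k :=
      thin_summable hf hp hp1 m
    have : thin p f m * t ^ m
        = ∑' k, f (m + k) * ((m + k).choose m : ℝ) * p ^ m * (1 - p) ^ k * t ^ m := by
      rw [thin, tsum_mul_right]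
    rw [this, ENNReal.ofReal_tsum_of_nonneg
      (fun k => mul_nonneg (thin_term_nonneg hf hp hp1 m k) (by positivity))
      (hsum.mul_right _)]
    exact tsum_congr fun k => by rw [congrFun (hterm m) k]
  -- reindex the inner sum
  have hre : ∀ m, (∑' k, ENNReal.ofReal (G m (m + k)))
      = ∑' n, ENNReal.ofReal (if m ≤ n then G m n else 0) := by
    intro m
    have hinj : Function.Injective (fun k : ℕ => m + k) := add_right_injective m
    have := hinj.tsum_eq (f := fun n => ENNReal.ofReal (if m ≤ n then G m n else 0)) ?_
    · rw [← this]
      exact tsum_congr fun k => by simp [Nat.le_add_right m k]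
    · intro n hn
      rcases le_or_gt m n with h | h
      · exact ⟨n - m, by simp; omega⟩
      · exfalso; apply hn; simp [Nat.not_le.mpr h]
  -- swap and compute the inner (now finite) sum
  have hswap : (∑' m, ∑' n, ENNReal.ofReal (if m ≤ n then G m n else 0))
      = ∑' n, ∑' m, ENNReal.ofReal (if m ≤ n then G m n else 0) := ENNReal.tsum_comm
  have hfin : ∀ n, (∑' m, ENNReal.ofReal (if m ≤ n then G m n else 0))
      = ENNReal.ofReal (f n * (1 - p + p * t) ^ n) := by
    intro n
    have h1 : (∑' m, ENNReal.ofReal (if m ≤ n then G m n else 0))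
        = ∑ m ∈ Finset.range (n + 1), ENNReal.ofReal (if m ≤ n then G m n else 0) := by
      apply tsum_eq_sum
      intro m hm
      have : ¬ m ≤ n := by
        intro h; exact hm (Finset.mem_range.mpr (by omega))
      simp [this]
    rw [h1]
    have h2 : ∀ m ∈ Finset.range (n + 1), ENNReal.ofReal (if m ≤ n then G m n else 0)
        = ENNReal.ofReal (G m n) := by
      intro m hm
      rw [if_pos (by rw [Finset.mem_range] at hm; omega)]
    rw [Finset.sum_congr rfl h2, ← ENNReal.ofReal_sum_of_nonneg (fun m _ => hGnonneg m n)]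
    congr 1
    have hbinom : (∑ m ∈ Finset.range (n + 1), (p*t) ^ m * (1-p) ^ (n - m) * (n.choose m : ℝ))
        = (p * t + (1 - p)) ^ n := (add_pow (p*t) (1-p) n).symm
    calc ∑ m ∈ Finset.range (n + 1), G m n
        = f n * ∑ m ∈ Finset.range (n + 1), (p*t) ^ m * (1-p) ^ (n - m) * (n.choose m : ℝ) := by
          rw [Finset.mul_sum]; apply Finset.sum_congr rfl; intro m _; rw [hG]; ring
    _ = f n * (1 - p + p * t) ^ n := by rw [hbinom]; ring_nf
  have key : (∑' m, ENNReal.ofReal (thin p f m * t ^ m))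
      = ENNReal.ofReal (∑' n, f n * (1 - p + p*t) ^ n) := by
    calc ∑' m, ENNReal.ofReal (thin p f m * t ^ m)
        = ∑' m, ∑' n, ENNReal.ofReal (if m ≤ n then G m n else 0) := by
          apply tsum_congr; intro m; rw [hof m, hre m]
    _ = ∑' n, ∑' m, ENNReal.ofReal (if m ≤ n then G m n else 0) := hswap
    _ = ∑' n, ENNReal.ofReal (f n * (1 - p + p*t) ^ n) := tsum_congr hfin
    _ = ENNReal.ofReal (∑' n, f n * (1 - p + p*t) ^ n) := by
          rw [ENNReal.ofReal_tsum_of_nonneg (fun n => mul_nonneg (hf.1 n) (by positivity))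
            (pgf_summable hf (by rw [abs_of_pos hs0]; exact hs1))]
  have hanonneg : ∀ m, 0 ≤ thin p f m * t ^ m := fun m =>
    mul_nonneg (thin_nonneg hf hp hp1 m) (by positivity)
  have hsummable : Summable fun m => thin p f m * t ^ m := by
    have hne : (∑' m, ENNReal.ofReal (thin p f m * t ^ m)) ≠ ⊤ := by
      rw [key]; exact ENNReal.ofReal_ne_top
    have := ENNReal.summable_toReal hne
    refine this.congr fun m => ?_
    rw [ENNReal.toReal_ofReal (hanonneg m)]
  refine ⟨hsummable, ?_⟩
  have h3 : ENNReal.ofReal (∑' m, thin p f m * t ^ m)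
      = ENNReal.ofReal (∑' n, f n * (1 - p + p*t) ^ n) := by
    rw [ENNReal.ofReal_tsum_of_nonneg hanonneg hsummable, key]
  exact (ENNReal.ofReal_eq_ofReal_iff (tsum_nonneg hanonneg)
    (tsum_nonneg fun n => mul_nonneg (hf.1 n) (by positivity))).mp h3


lemma iteratedDerivWithin_congr_set' {f : ℝ → ℝ} {s u : Set ℝ} {x : ℝ}
    (h : s =ᶠ[nhds x] u) (n : ℕ) :
    iteratedDerivWithin n f s x = iteratedDerivWithin n f u x := by
  simp only [iteratedDerivWithin_eq_iteratedFDerivWithin, iteratedFDerivWithin_congr_set h n]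

lemma iteratedDerivWithin_comp_affine {g : ℝ → ℝ} {s : Set ℝ} (hs : UniqueDiffOn ℝ s)
    (hg : ContDiffOn ℝ ((⊤ : ℕ∞) : WithTop ℕ∞) g s) {a p : ℝ}
    (hmap : ∀ x ∈ s, a + p * x ∈ s) (n : ℕ) :
    ∀ x ∈ s, iteratedDerivWithin n (fun y => g (a + p * y)) s x
      = p ^ n * iteratedDerivWithin n g s (a + p * x) := by
  induction n with
  | zero => intro x hx; simp
  | succ n IH =>
    intro x hx
    have hu : UniqueDiffWithinAt ℝ s x := hs x hx
    rw [iteratedDerivWithin_succ]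
    rw [derivWithin_congr (fun y hy => IH y hy) (IH x hx)]
    have hG : DifferentiableWithinAt ℝ (iteratedDerivWithin n g s) s (a + p * x) := by
      have hlt : (n : WithTop ℕ∞) < ((⊤ : ℕ∞) : WithTop ℕ∞) := by
        exact_mod_cast WithTop.coe_lt_top n
      exact (hg.differentiableOn_iteratedDerivWithin hlt hs) (a + p * x) (hmap x hx)
    have haff : HasDerivWithinAt (fun y : ℝ => a + p * y) p s x := by
      simpa using ((hasDerivWithinAt_id x s).const_mul p).const_add a
    have hcomp : HasDerivWithinAt (fun y => iteratedDerivWithin n g s (a + p * y))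
        (derivWithin (iteratedDerivWithin n g s) s (a + p * x) * p) s x := by
      have := (hG.hasDerivWithinAt).comp x haff (fun y hy => hmap y hy)
      exact this
    have hder := (hcomp.const_mul (p ^ n)).derivWithin hu
    rw [hder, iteratedDerivWithin_succ]
    ring

lemma iteratedDerivWithin_poly {N : ℕ} (b : Fin N → ℝ) (mm : Fin N → ℕ) {s : Set ℝ}
    (hs : UniqueDiffOn ℝ s) (k : ℕ) :
    ∀ x ∈ s, iteratedDerivWithin k (fun t => ∑ j, b j * (t - 1) ^ (mm j)) s x
      = ∑ j, b j * ((mm j).descFactorial k : ℝ) * (x - 1) ^ (mm j - k) := by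
  induction k with
  | zero => intro x hx; simp
  | succ k IH =>
    intro x hx
    rw [iteratedDerivWithin_succ]
    rw [derivWithin_congr (fun y hy => IH y hy) (IH x hx)]
    have hd : HasDerivWithinAt
        (fun y : ℝ => ∑ j, b j * ((mm j).descFactorial k : ℝ) * (y - 1) ^ (mm j - k))
        (∑ j, b j * ((mm j).descFactorial (k+1) : ℝ) * (x - 1) ^ (mm j - (k+1))) s x := by
      apply HasDerivWithinAt.fun_sum
      intro j _
      have h1 : HasDerivWithinAt (fun y : ℝ => (y - 1) ^ (mm j - k))
          (((mm j - k : ℕ) : ℝ) * (x-1) ^ (mm j - k - 1)) s x := by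
        simpa using (((hasDerivWithinAt_id x s).sub_const 1).fun_pow (mm j - k))
      have h2 := h1.const_mul (b j * ((mm j).descFactorial k : ℝ))
      refine h2.congr_deriv ?_
      rw [Nat.descFactorial_succ, ← Nat.sub_sub]
      push_cast
      ring
    exact hd.derivWithin (hs x hx)


section Linearity

variable {r : ℕ} {Θ : Set (Fin r → ℝ)}

lemma sum_mem_cone (hconv : Convex ℝ Θ) (hcone : ∀ c : ℝ, 0 < c → ∀ θ ∈ Θ, c • θ ∈ Θ)
    {θ₁ θ₂ : Fin r → ℝ} (h₁ : θ₁ ∈ Θ) (h₂ : θ₂ ∈ Θ) : θ₁ + θ₂ ∈ Θ := by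
  have hmid : (1/2 : ℝ) • θ₁ + (1/2 : ℝ) • θ₂ ∈ Θ :=
    hconv h₁ h₂ (by norm_num) (by norm_num) (by norm_num)
  have h2 := hcone 2 (by norm_num) _ hmid
  have heq : (2:ℝ) • ((1/2 : ℝ) • θ₁ + (1/2 : ℝ) • θ₂) = θ₁ + θ₂ := by module
  rwa [heq] at h2

variable (hopen : IsOpen Θ) (hconv : Convex ℝ Θ)
  (hcone : ∀ c : ℝ, 0 < c → ∀ θ ∈ Θ, c • θ ∈ Θ)
  {g : (Fin r → ℝ) → ℝ}
  (hadd : ∀ θ₁ ∈ Θ, ∀ θ₂ ∈ Θ, g (θ₁ + θ₂) = g θ₁ + g θ₂)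
  (hcont : ContinuousOn g Θ)

include hopen hconv hcone hadd hcont

-- ℕ homogeneity
lemma g_nat (n : ℕ) (hn : 1 ≤ n) : ∀ θ ∈ Θ, g ((n : ℝ) • θ) = n * g θ := by
  induction n with
  | zero => omega
  | succ n IH =>
    intro θ hθ
    rcases Nat.eq_zero_or_pos n with rfl | hn'
    · simp
    · have hmem : (n : ℝ) • θ ∈ Θ := hcone _ (by exact_mod_cast hn') _ hθ
      have : ((n+1 : ℕ) : ℝ) • θ = (n : ℝ) • θ + θ := by push_cast; module
      rw [this, hadd _ hmem _ hθ, IH hn' θ hθ]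
      push_cast; ring

-- positive rational homogeneity
lemma g_rat (m n : ℕ) (hm : 1 ≤ m) (hn : 1 ≤ n) :
    ∀ θ ∈ Θ, g (((m : ℝ)/(n : ℝ)) • θ) = ((m : ℝ)/(n : ℝ)) * g θ := by
  intro θ hθ
  have hn0 : (0:ℝ) < n := by exact_mod_cast hn
  have hψ : ((1:ℝ)/n) • θ ∈ Θ := hcone _ (by positivity) _ hθ
  have h1 : ((m : ℝ)/(n : ℝ)) • θ = (m : ℝ) • (((1:ℝ)/n) • θ) := by
    rw [smul_smul]; congr 1; field_simp
  have h2 : θ = (n : ℝ) • (((1:ℝ)/n) • θ) := by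
    rw [smul_smul]; rw [show (n : ℝ) * (1/n) = 1 by field_simp]; simp
  have h3 : g θ = n * g (((1:ℝ)/n) • θ) := by
    conv_lhs => rw [h2]
    exact g_nat hopen hconv hcone hadd hcont n hn _ hψ
  rw [h1, g_nat hopen hconv hcone hadd hcont m hm _ hψ, h3]
  field_simp

-- positive real homogeneity
lemma g_pos_real {c : ℝ} (hc : 0 < c) : ∀ θ ∈ Θ, g (c • θ) = c * g θ := by
  intro θ hθ
  -- rational approximations from below
  have hq : ∀ k : ℕ, ∃ q : ℚ, c - min c (1/(k+1))/2 < (q:ℝ) ∧ (q:ℝ) < c := by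
    intro k
    apply exists_rat_btwn
    have : (0:ℝ) < min c (1/(k+1))/2 := by positivity
    linarith
  choose q hq1 hq2 using hq
  have hqpos : ∀ k, 0 < ((q k : ℝ)) := by
    intro k
    have : min c (1/(k+1))/2 ≤ c/2 := by
      apply div_le_div_of_nonneg_right (min_le_left _ _) (by norm_num)
    have := hq1 k
    linarith [hq1 k]
  have htend : Tendsto (fun k => ((q k : ℝ))) atTop (nhds c) := by
    have hlow : Tendsto (fun k : ℕ => c - 1/((k:ℝ)+1)) atTop (nhds c) := by
      have h0 : Tendsto (fun k : ℕ => 1/((k:ℝ)+1)) atTop (nhds 0) :=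
        tendsto_one_div_add_atTop_nhds_zero_nat
      simpa using (tendsto_const_nhds (x := c) (f := atTop)).sub h0
    have hb1 : ∀ k : ℕ, c - 1/((k:ℝ)+1) ≤ ((q k : ℝ)) := by
      intro k
      have h1 : min c (1/((k:ℝ)+1)) ≤ 1/((k:ℝ)+1) := min_le_right _ _
      have h2 : (0:ℝ) < 1/((k:ℝ)+1) := by positivity
      have := hq1 k
      linarith
    exact tendsto_of_tendsto_of_tendsto_of_le_of_le hlow tendsto_const_nhds hb1
      (fun k => le_of_lt (hq2 k))
  -- each rational scaling
  have hgq : ∀ k, g (((q k : ℝ)) • θ) = ((q k : ℝ)) * g θ := by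
    intro k
    have hnum : 0 < (q k).num := Rat.num_pos.mpr (by exact_mod_cast hqpos k)
    have hden : 1 ≤ (q k).den := (q k).den_pos
    have hcast : ((q k : ℝ)) = (((q k).num.toNat : ℝ))/(((q k).den : ℝ)) := by
      rw [Rat.cast_def]
      congr 1
      have h := Int.toNat_of_nonneg (le_of_lt hnum)
      exact_mod_cast h.symm
    rw [hcast]
    exact g_rat hopen hconv hcone hadd hcont _ _ (by omega) hden θ hθ
  -- pass to the limit
  have hmem : c • θ ∈ Θ := hcone c hc θ hθ
  have hca : ContinuousAt g (c • θ) := hcont.continuousAt (hopen.mem_nhds hmem)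
  have hlim1 : Tendsto (fun k => g (((q k : ℝ)) • θ)) atTop (nhds (g (c • θ))) := by
    apply hca.tendsto.comp
    exact (htend.smul_const θ)
  have hlim2 : Tendsto (fun k => ((q k : ℝ)) * g θ) atTop (nhds (c * g θ)) :=
    htend.mul_const _
  exact tendsto_nhds_unique (hlim1.congr fun k => (hgq k)) hlim2

-- affine along a segment, real ratio
lemma g_seg {θ₀ : Fin r → ℝ} (hθ₀ : θ₀ ∈ Θ) (v : Fin r → ℝ) {C : ℝ} (hC : 0 < C)
    (hsub : ∀ τ : ℝ, 0 ≤ τ → τ ≤ C → θ₀ + τ • v ∈ Θ) :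
    ∀ c' : ℝ, 0 ≤ c' → c' ≤ C →
      g (θ₀ + c' • v) = g θ₀ + (c'/C) * (g (θ₀ + C • v) - g θ₀) := by
  -- rational case first
  have hrat : ∀ m n : ℕ, 1 ≤ m → m ≤ n →
      g (θ₀ + (((m:ℝ)/(n:ℝ)) * C) • v)
        = g θ₀ + ((m:ℝ)/(n:ℝ)) * (g (θ₀ + C • v) - g θ₀) := by
    intro m n hm hmn
    have hn : 1 ≤ n := le_trans hm hmn
    have hn0 : (0:ℝ) < n := by exact_mod_cast hn
    have hm0 : (0:ℝ) < m := by exact_mod_cast hm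
    have hfrac0 : 0 ≤ ((m:ℝ)/(n:ℝ)) * C := by positivity
    have hfrac1 : ((m:ℝ)/(n:ℝ)) * C ≤ C := by
      have : (m:ℝ)/(n:ℝ) ≤ 1 := by
        rw [div_le_one hn0]; exact_mod_cast hmn
      nlinarith
    have hA : θ₀ + (((m:ℝ)/(n:ℝ)) * C) • v ∈ Θ := hsub _ hfrac0 hfrac1
    have hB : θ₀ + C • v ∈ Θ := hsub C (le_of_lt hC) le_rfl
    have hkey : (n : ℝ) • (θ₀ + (((m:ℝ)/(n:ℝ)) * C) • v)
        = (m : ℝ) • (θ₀ + C • v) + ((n - m : ℕ) : ℝ) • θ₀ := by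
      push_cast [Nat.cast_sub hmn]
      rw [smul_add, smul_smul, smul_add, smul_smul]
      rw [show (n:ℝ) * ((m:ℝ)/(n:ℝ) * C) = (m:ℝ) * C by field_simp]
      module
    have hL : g ((n : ℝ) • (θ₀ + (((m:ℝ)/(n:ℝ)) * C) • v))
        = n * g (θ₀ + (((m:ℝ)/(n:ℝ)) * C) • v) :=
      g_nat hopen hconv hcone hadd hcont n hn _ hA
    rcases Nat.eq_or_lt_of_le hmn with rfl | hlt
    · -- m = n
      have : ((m:ℝ)/(m:ℝ)) = 1 := by field_simp
      rw [this]; simp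
    · have hnm : 1 ≤ n - m := by omega
      have hmA : (m : ℝ) • (θ₀ + C • v) ∈ Θ := hcone _ hm0 _ hB
      have hnmB : ((n - m : ℕ) : ℝ) • θ₀ ∈ Θ :=
        hcone _ (by exact_mod_cast hnm) _ hθ₀
      have hR : g ((m : ℝ) • (θ₀ + C • v) + ((n - m : ℕ) : ℝ) • θ₀)
          = m * g (θ₀ + C • v) + ((n - m : ℕ) : ℝ) * g θ₀ := by
        rw [hadd _ hmA _ hnmB,
          g_nat hopen hconv hcone hadd hcont m hm _ hB,
          g_nat hopen hconv hcone hadd hcont (n - m) hnm _ hθ₀]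
      have hthis := hL.symm.trans (by rw [hkey, hR])
      have hcast : ((n - m : ℕ) : ℝ) = (n:ℝ) - (m:ℝ) := by
        push_cast [Nat.cast_sub hmn]; ring
      rw [hcast] at hthis
      have hX : g (θ₀ + (((m:ℝ)/(n:ℝ)) * C) • v)
          = ((m:ℝ) * g (θ₀ + C • v) + ((n:ℝ) - (m:ℝ)) * g θ₀)/(n:ℝ) := by
        rw [eq_div_iff (ne_of_gt hn0)]
        linear_combination hthis
      rw [hX]
      field_simp
      ring
  -- real case
  intro c' hc'0 hc'C
  rcases eq_or_lt_of_le hc'0 with rfl | hpos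
  · simp
  rcases eq_or_lt_of_le hc'C with rfl | hlt
  · field_simp; ring
  -- 0 < c' < C : approximate c'/C by rationals from below
  set ρ := c'/C with hρdef
  have hρ0 : 0 < ρ := by positivity
  have hρ1 : ρ < 1 := (div_lt_one hC).mpr hlt
  have hq : ∀ k : ℕ, ∃ q : ℚ, ρ - min ρ (1/(k+1))/2 < (q:ℝ) ∧ (q:ℝ) < ρ := by
    intro k
    apply exists_rat_btwn
    have : (0:ℝ) < min ρ (1/(k+1))/2 := by positivity
    linarith
  choose q hq1 hq2 using hq
  have hqpos : ∀ k, 0 < ((q k : ℝ)) := by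
    intro k
    have : min ρ (1/((k:ℝ)+1))/2 ≤ ρ/2 := by
      apply div_le_div_of_nonneg_right (min_le_left _ _) (by norm_num)
    linarith [hq1 k]
  have hqlt1 : ∀ k, ((q k : ℝ)) < 1 := fun k => lt_trans (hq2 k) hρ1
  have htend : Tendsto (fun k => ((q k : ℝ))) atTop (nhds ρ) := by
    have hlow : Tendsto (fun k : ℕ => ρ - 1/((k:ℝ)+1)) atTop (nhds ρ) := by
      have h0 : Tendsto (fun k : ℕ => 1/((k:ℝ)+1)) atTop (nhds 0) :=
        tendsto_one_div_add_atTop_nhds_zero_nat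
      simpa using (tendsto_const_nhds (x := ρ) (f := atTop)).sub h0
    have hb1 : ∀ k : ℕ, ρ - 1/((k:ℝ)+1) ≤ ((q k : ℝ)) := by
      intro k
      have h1 : min ρ (1/((k:ℝ)+1)) ≤ 1/((k:ℝ)+1) := min_le_right _ _
      have h2 : (0:ℝ) < 1/((k:ℝ)+1) := by positivity
      have := hq1 k
      linarith
    exact tendsto_of_tendsto_of_tendsto_of_le_of_le hlow tendsto_const_nhds hb1
      (fun k => le_of_lt (hq2 k))
  have hgq : ∀ k, g (θ₀ + (((q k : ℝ)) * C) • v)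
      = g θ₀ + ((q k : ℝ)) * (g (θ₀ + C • v) - g θ₀) := by
    intro k
    have hnum : 0 < (q k).num := Rat.num_pos.mpr (by exact_mod_cast hqpos k)
    have hden : 1 ≤ (q k).den := (q k).den_pos
    have hcast : ((q k : ℝ)) = (((q k).num.toNat : ℝ))/(((q k).den : ℝ)) := by
      rw [Rat.cast_def]
      congr 1
      have h := Int.toNat_of_nonneg (le_of_lt hnum)
      exact_mod_cast h.symm
    have hmn : (q k).num.toNat ≤ (q k).den := by
      by_contra hcon
      push_neg at hcon
      have : (1:ℝ) ≤ ((q k).num.toNat : ℝ)/(((q k).den : ℝ)) := by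
        rw [le_div_iff₀ (by exact_mod_cast (q k).den_pos)]
        rw [one_mul]
        exact_mod_cast le_of_lt hcon
      rw [← hcast] at this
      linarith [hqlt1 k]
    rw [hcast]
    exact hrat _ _ (by omega) hmn
  -- limits
  have hmemc' : θ₀ + c' • v ∈ Θ := hsub c' hc'0 hc'C
  have hca : ContinuousAt g (θ₀ + c' • v) := hcont.continuousAt (hopen.mem_nhds hmemc')
  have hptend : Tendsto (fun k => θ₀ + (((q k : ℝ)) * C) • v) atTop (nhds (θ₀ + c' • v)) := by
    have h1 : Tendsto (fun k => ((q k : ℝ)) * C) atTop (nhds c') := by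
      have := htend.mul_const C
      rw [hρdef] at this
      convert this using 2
      field_simp
    exact tendsto_const_nhds.add (h1.smul_const v)
  have hlim1 : Tendsto (fun k => g (θ₀ + (((q k : ℝ)) * C) • v)) atTop
      (nhds (g (θ₀ + c' • v))) := hca.tendsto.comp hptend
  have hlim2 : Tendsto (fun k => g θ₀ + ((q k : ℝ)) * (g (θ₀ + C • v) - g θ₀)) atTop
      (nhds (g θ₀ + ρ * (g (θ₀ + C • v) - g θ₀))) :=
    tendsto_const_nhds.add (htend.mul_const _)
  have := tendsto_nhds_unique (hlim1.congr fun k => hgq k) hlim2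
  rw [this]


lemma additive_linear {θ₀ : Fin r → ℝ} (hθ₀ : θ₀ ∈ Θ) :
    ∃ a : Fin r → ℝ, ∀ θ ∈ Θ, g θ = ∑ i, a i * θ i := by
  obtain ⟨ρ, hρ, hball⟩ := Metric.isOpen_iff.mp hopen θ₀ hθ₀
  set δ := ρ/2 with hδ
  have hδ0 : 0 < δ := by positivity
  have hmem : ∀ w : Fin r → ℝ, ‖w‖ < ρ → θ₀ + w ∈ Θ := by
    intro w hw
    apply hball
    rw [Metric.mem_ball, dist_eq_norm]
    simpa using hw
  set e : Fin r → (Fin r → ℝ) := fun i => Pi.single i 1 with he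
  have hnorme : ∀ i, ‖e i‖ = 1 := by
    intro i; rw [he]; rw [Pi.norm_single]; simp
  set a : Fin r → ℝ := fun i => (g (θ₀ + δ • e i) - g θ₀)/δ with ha
  refine ⟨a, ?_⟩
  intro θ hθ
  have hseg1 : ∀ (v : Fin r → ℝ), ‖v‖ = 1 → ∀ τ : ℝ, 0 ≤ τ → τ ≤ δ →
      g (θ₀ + τ • v) = g θ₀ + (τ/δ) * (g (θ₀ + δ • v) - g θ₀) := by
    intro v hv τ h0 h1
    refine g_seg hopen hconv hcone hadd hcont hθ₀ v hδ0 ?_ τ h0 h1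
    intro σ h0' h1'
    apply hmem
    rw [norm_smul, hv, mul_one, Real.norm_eq_abs, abs_of_nonneg h0']
    calc σ ≤ δ := h1'
    _ < ρ := by rw [hδ]; linarith
  set M := ‖θ‖ + 1 with hM
  have hM0 : 0 < M := by positivity
  set c := δ / (((r:ℝ)+1) * M) with hc
  have hc0 : 0 < c := by positivity
  have habs : ∀ i, |c * θ i| ≤ δ/((r:ℝ)+1) := by
    intro i
    rw [abs_mul, abs_of_pos hc0]
    have h1 : |θ i| ≤ ‖θ‖ := by
      have := norm_le_pi_norm θ i
      simpa using this
    calc c * |θ i| ≤ c * M := by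
          apply mul_le_mul_of_nonneg_left _ (le_of_lt hc0)
          rw [hM]; linarith
    _ = δ/((r:ℝ)+1) := by rw [hc]; field_simp
  have hps : ∀ s : Finset (Fin r), ‖∑ i ∈ s, (c * θ i) • e i‖ < ρ := by
    intro s
    calc ‖∑ i ∈ s, (c * θ i) • e i‖ ≤ ∑ i ∈ s, ‖(c * θ i) • e i‖ := norm_sum_le _ _
    _ = ∑ i ∈ s, |c * θ i| := by
        apply Finset.sum_congr rfl
        intro i _
        rw [norm_smul, hnorme i, mul_one, Real.norm_eq_abs]
    _ ≤ ∑ _i ∈ s, δ/((r:ℝ)+1) := Finset.sum_le_sum (fun i _ => habs i)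
    _ = s.card * (δ/((r:ℝ)+1)) := by rw [Finset.sum_const, nsmul_eq_mul]
    _ ≤ (r:ℝ) * (δ/((r:ℝ)+1)) := by
        apply mul_le_mul_of_nonneg_right _ (by positivity)
        have := s.card_le_univ
        simp only [Finset.card_univ, Fintype.card_fin] at this
        exact_mod_cast this
    _ < ρ := by
        have heq : (r:ℝ) * (δ/((r:ℝ)+1)) = ((r:ℝ)*δ)/((r:ℝ)+1) := by ring
        rw [heq, div_lt_iff₀ (by positivity : (0:ℝ) < (r:ℝ)+1), hδ]
        nlinarith [Nat.cast_nonneg (α := ℝ) r, hρ]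
  have hpair : ∀ w x : Fin r → ℝ, θ₀ + w ∈ Θ → θ₀ + x ∈ Θ → θ₀ + (w+x) ∈ Θ →
      g (θ₀ + (w+x)) = g (θ₀ + w) + g (θ₀ + x) - g θ₀ := by
    intro w x hw hx hwx
    have h1 := hadd _ hw _ hx
    have h2 := hadd _ hθ₀ _ hwx
    have heq : (θ₀ + w) + (θ₀ + x) = θ₀ + (θ₀ + (w + x)) := by module
    rw [heq, h2] at h1
    linarith
  have hind : ∀ s : Finset (Fin r),
      g (θ₀ + ∑ i ∈ s, (c * θ i) • e i)
        = g θ₀ + ∑ i ∈ s, (g (θ₀ + (c * θ i) • e i) - g θ₀) := by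
    intro s
    induction s using Finset.induction_on with
    | empty => simp
    | @insert j s hj IH =>
      rw [Finset.sum_insert hj, Finset.sum_insert hj]
      have h1 : θ₀ + (c * θ j) • e j ∈ Θ := hmem _ (by simpa using hps {j})
      have h2 : θ₀ + ∑ i ∈ s, (c * θ i) • e i ∈ Θ := hmem _ (hps s)
      have h3 : θ₀ + ((c * θ j) • e j + ∑ i ∈ s, (c * θ i) • e i) ∈ Θ := by
        apply hmem
        have := hps (insert j s)
        rwa [Finset.sum_insert hj] at this
      rw [hpair _ _ h1 h2 h3, IH]
      ring
  have hcoord : ∀ i, g (θ₀ + (c * θ i) • e i) - g θ₀ = c * θ i * a i := by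
    intro i
    rcases lt_trichotomy (θ i) 0 with hneg | hzero | hpos
    · -- negative coordinate
      set τ := -(c * θ i) with hτ
      have hτ0 : 0 < τ := by rw [hτ]; nlinarith
      have hτδ : τ ≤ δ := by
        have := habs i
        have h2 : δ/((r:ℝ)+1) ≤ δ := by
          rw [div_le_iff₀ (by positivity : (0:ℝ) < (r:ℝ)+1)]
          nlinarith [Nat.cast_nonneg (α := ℝ) r]
        calc τ ≤ |c * θ i| := by rw [hτ]; exact neg_le_abs _
        _ ≤ δ/((r:ℝ)+1) := this
        _ ≤ δ := h2
      have hv : ‖-(e i)‖ = 1 := by rw [norm_neg]; exact hnorme i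
      have hpt : θ₀ + (c * θ i) • e i = θ₀ + τ • (-(e i)) := by
        rw [hτ]; module
      have h4 := hseg1 (-(e i)) hv τ (le_of_lt hτ0) hτδ
      have hopp : g (θ₀ + δ • (-(e i))) - g θ₀ = -(g (θ₀ + δ • e i) - g θ₀) := by
        have hm1 : θ₀ + δ • e i ∈ Θ := hmem _ (by
          rw [norm_smul, hnorme i, mul_one, Real.norm_eq_abs, abs_of_pos hδ0, hδ]; linarith)
        have hm2 : θ₀ + δ • (-(e i)) ∈ Θ := hmem _ (by
          rw [norm_smul, hv, mul_one, Real.norm_eq_abs, abs_of_pos hδ0, hδ]; linarith)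
        have h5 := hadd _ hm1 _ hm2
        have heq2 : (θ₀ + δ • e i) + (θ₀ + δ • (-(e i))) = (2:ℝ) • θ₀ := by module
        rw [heq2] at h5
        have h6 : g ((2:ℝ) • θ₀) = 2 * g θ₀ := by
          have := g_nat hopen hconv hcone hadd hcont 2 (by norm_num) θ₀ hθ₀
          simpa using this
        rw [h6] at h5
        linarith
      rw [hpt, h4, hopp, ha]
      have hsub : c * θ i = -τ := by rw [hτ]; ring
      rw [hsub]
      field_simp
      ring
    · simp [hzero]
    · -- positive coordinate
      set τ := c * θ i with hτ
      have hτ0 : 0 < τ := by rw [hτ]; nlinarith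
      have hτδ : τ ≤ δ := by
        have := habs i
        have h2 : δ/((r:ℝ)+1) ≤ δ := by
          rw [div_le_iff₀ (by positivity : (0:ℝ) < (r:ℝ)+1)]
          nlinarith [Nat.cast_nonneg (α := ℝ) r]
        calc τ ≤ |c * θ i| := le_abs_self _
        _ ≤ δ := le_trans this h2
      have h4 := hseg1 (e i) (hnorme i) τ (le_of_lt hτ0) hτδ
      rw [h4, ha]
      field_simp
      ring
  -- assemble
  have hsum : g (θ₀ + c • θ) = g θ₀ + ∑ i, (c * θ i) * a i := by
    have hdecomp : c • θ = ∑ i, (c * θ i) • e i := by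
      funext j
      rw [Finset.sum_apply]
      simp [he, Pi.single_apply, Finset.sum_ite_eq, Finset.sum_ite_eq']
    rw [hdecomp, hind Finset.univ]
    congr 1
    exact Finset.sum_congr rfl (fun i _ => hcoord i)
  have hsplit : g (θ₀ + c • θ) = g θ₀ + c * g θ := by
    have hcθ : c • θ ∈ Θ := hcone c hc0 θ hθ
    rw [hadd _ hθ₀ _ hcθ, g_pos_real hopen hconv hcone hadd hcont hc0 θ hθ]
  have : c * g θ = ∑ i, (c * θ i) * a i := by linarith [hsum, hsplit]
  have h7 : c * g θ = c * ∑ i, a i * θ i := by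
    rw [this, Finset.mul_sum]
    exact Finset.sum_congr rfl (fun i _ => by ring)
  exact mul_left_cancel₀ (ne_of_gt hc0) h7

end Linearity

lemma linear_forms_eq {r : ℕ} {Θ : Set (Fin r → ℝ)} (hopen : IsOpen Θ)
    {θ₀ : Fin r → ℝ} (hθ₀ : θ₀ ∈ Θ) {b b' : Fin r → ℝ}
    (h : ∀ θ ∈ Θ, ∑ i, b i * θ i = ∑ i, b' i * θ i) : b = b' := by
  obtain ⟨ρ, hρ, hball⟩ := Metric.isOpen_iff.mp hopen θ₀ hθ₀
  funext i
  have hmem : θ₀ + (ρ/2) • (Pi.single i 1 : Fin r → ℝ) ∈ Θ := by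
    apply hball
    rw [Metric.mem_ball, dist_eq_norm]
    have heq : θ₀ + (ρ/2) • (Pi.single i 1 : Fin r → ℝ) - θ₀
        = (ρ/2) • (Pi.single i 1 : Fin r → ℝ) := by abel
    rw [heq, norm_smul, Pi.norm_single]
    simp only [norm_one, mul_one, Real.norm_eq_abs]
    rw [abs_of_pos (by positivity)]
    linarith
  have hexp : ∀ bb : Fin r → ℝ, ∑ j, bb j * (θ₀ + (ρ/2) • (Pi.single i 1 : Fin r → ℝ)) j
      = (∑ j, bb j * θ₀ j) + (ρ/2) * bb i := by
    intro bb
    have h1 : ∀ j, bb j * (θ₀ + (ρ/2) • (Pi.single i 1 : Fin r → ℝ)) j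
        = bb j * θ₀ j + (if j = i then (ρ/2) * bb j else 0) := by
      intro j
      simp only [Pi.add_apply, Pi.smul_apply, Pi.single_apply, smul_eq_mul]
      split
      · ring
      · ring
    rw [Finset.sum_congr rfl (fun j _ => h1 j), Finset.sum_add_distrib,
      Finset.sum_ite_eq' Finset.univ i (fun j => (ρ/2) * bb j)]
    simp
  have h1 := h θ₀ hθ₀
  have h2 := h _ hmem
  rw [hexp b, hexp b'] at h2
  have h3 : (ρ/2) * b i = (ρ/2) * b' i := by linarith
  exact mul_left_cancel₀ (by positivity : (ρ/2:ℝ) ≠ 0) h3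

/-- necessity in Theorem 1. -/
theorem theorem1_necessity (r : ℕ) (hr : 1 ≤ r) (Θ : Set (Fin r → ℝ)) (hne : Θ.Nonempty)
    (hopen : IsOpen Θ) (hconv : Convex ℝ Θ)
    (hcone : ∀ c : ℝ, 0 < c → ∀ θ ∈ Θ, c • θ ∈ Θ)
    (f : (Fin r → ℝ) → ℕ → ℝ) (Φ : ℝ → (Fin r → ℝ) → ℝ)
    (hpmf : ∀ θ ∈ Θ, IsPMF (f θ))
    (hΦ : ∀ θ ∈ Θ, ∀ t ∈ Set.Ioc (-1 : ℝ) 1, Φ t θ = ∑' n : ℕ, f θ n * t ^ n)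
    (hsmooth : ∀ θ ∈ Θ, ContDiffOn ℝ ((⊤ : ℕ∞) : WithTop ℕ∞) (fun t => Φ t θ)
      (Set.Ioc (-1 : ℝ) 1))
    (hcum : ∀ θ ∈ Θ, ∀ i : Fin r,
      iteratedDerivWithin (i.1 + 1) (fun t => Real.log (Φ t θ)) (Set.Ioc (-1 : ℝ) 1) 1
        = θ i)
    (hcont : ∀ t ∈ Set.Ioc (-1 : ℝ) 1, ContinuousOn (fun θ => Φ t θ) Θ)
    (hadd : ∀ θ₁ ∈ Θ, ∀ θ₂ ∈ Θ,
      (fun n : ℕ => ∑ j ∈ Finset.range (n + 1), f θ₁ j * f θ₂ (n - j)) = f (θ₁ + θ₂))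
    (hthin : ∀ θ ∈ Θ, ∀ p ∈ Set.Ioc (0 : ℝ) 1, ∃ θ' ∈ Θ, thin p (f θ) = f θ') :
    ∀ θ ∈ Θ, ∀ t ∈ Set.Ioc (-1 : ℝ) 1,
      Φ t θ = Real.exp (∑ i : Fin r, θ i * (t - 1) ^ (i.1 + 1) / (i.1 + 1).factorial) := by
  classical
  obtain ⟨θbase, hθbase⟩ := hne
  have huniq : UniqueDiffOn ℝ (Set.Ioc (0:ℝ) 1) := uniqueDiffOn_Ioc 0 1
  have hsub : Set.Ioc (0:ℝ) 1 ⊆ Set.Ioc (-1:ℝ) 1 := fun x hx => ⟨by linarith [hx.1], hx.2⟩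
  have hsum_mem : ∀ θ₁ ∈ Θ, ∀ θ₂ ∈ Θ, θ₁ + θ₂ ∈ Θ :=
    fun θ₁ h₁ θ₂ h₂ => sum_mem_cone hconv hcone h₁ h₂
  have hpos : ∀ θ ∈ Θ, ∀ t ∈ Set.Ioc (0:ℝ) 1, 0 < Φ t θ := by
    intro θ hθ t ht
    rw [hΦ θ hθ t (hsub ht)]
    exact pgf_pos (hpmf θ hθ) ht.1 ht.2
  have habs1 : ∀ t ∈ Set.Ioc (-1:ℝ) 1, |t| ≤ 1 :=
    fun t ht => abs_le.mpr ⟨by linarith [ht.1], ht.2⟩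
  have hmul : ∀ θ₁ ∈ Θ, ∀ θ₂ ∈ Θ, ∀ t ∈ Set.Ioc (-1:ℝ) 1,
      Φ t (θ₁ + θ₂) = Φ t θ₁ * Φ t θ₂ := by
    intro θ₁ h₁ θ₂ h₂ t ht
    rw [hΦ _ (hsum_mem _ h₁ _ h₂) t ht, hΦ _ h₁ t ht, hΦ _ h₂ t ht, ← hadd _ h₁ _ h₂]
    exact conv_pgf (hpmf _ h₁) (hpmf _ h₂) (habs1 t ht)
  have hLadd : ∀ t ∈ Set.Ioc (0:ℝ) 1, ∀ θ₁ ∈ Θ, ∀ θ₂ ∈ Θ,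
      Real.log (Φ t (θ₁ + θ₂)) = Real.log (Φ t θ₁) + Real.log (Φ t θ₂) := by
    intro t ht θ₁ h₁ θ₂ h₂
    rw [hmul _ h₁ _ h₂ t (hsub ht)]
    exact Real.log_mul (ne_of_gt (hpos _ h₁ t ht)) (ne_of_gt (hpos _ h₂ t ht))
  have hLcont : ∀ t ∈ Set.Ioc (0:ℝ) 1, ContinuousOn (fun θ => Real.log (Φ t θ)) Θ :=
    fun t ht => (hcont t (hsub ht)).log (fun θ hθ => ne_of_gt (hpos θ hθ t ht))
  -- linear representation of log Φ in θ
  have hlin : ∀ t : ℝ, ∃ a : Fin r → ℝ, t ∈ Set.Ioc (0:ℝ) 1 →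
      ∀ θ ∈ Θ, Real.log (Φ t θ) = ∑ i, a i * θ i := by
    intro t
    by_cases ht : t ∈ Set.Ioc (0:ℝ) 1
    · obtain ⟨a, ha⟩ := additive_linear hopen hconv hcone
        (fun θ₁ h₁ θ₂ h₂ => hLadd t ht θ₁ h₁ θ₂ h₂) (hLcont t ht) hθbase
      exact ⟨a, fun _ => ha⟩
    · exact ⟨0, fun h => absurd h ht⟩
  choose A hA using hlin
  have hone : (1:ℝ) ∈ Set.Ioc (0:ℝ) 1 := by constructor <;> norm_num
  have hhalf : (1/2:ℝ) ∈ Set.Ioc (0:ℝ) 1 := by constructor <;> norm_num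
  have hΦ1 : ∀ θ ∈ Θ, Φ 1 θ = 1 := by
    intro θ hθ
    rw [hΦ θ hθ 1 (hsub hone), tsum_congr (fun n => by rw [one_pow, mul_one])]
    exact (hpmf θ hθ).2.tsum_eq
  have hA1 : ∀ i, A 1 i = 0 := by
    have hforms : ∀ θ ∈ Θ, ∑ i, A 1 i * θ i = ∑ i, (0:ℝ) * θ i := by
      intro θ hθ
      rw [← hA 1 hone θ hθ, hΦ1 θ hθ]
      simp
    have h := linear_forms_eq hopen hθbase hforms
    intro i
    exact congrFun h i
  -- smoothness of log Φ
  have hLsmooth : ∀ θ ∈ Θ, ContDiffOn ℝ ((⊤ : ℕ∞) : WithTop ℕ∞)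
      (fun t => Real.log (Φ t θ)) (Set.Ioc (0:ℝ) 1) := by
    intro θ hθ
    exact ((hsmooth θ hθ).mono hsub).log (fun t ht => ne_of_gt (hpos θ hθ t ht))
  -- transfer of cumulants to the smaller set
  have hsetEq : Set.Ioc (-1:ℝ) 1 =ᶠ[nhds 1] Set.Ioc (0:ℝ) 1 := by
    filter_upwards [isOpen_Ioi.mem_nhds (show (0:ℝ) < 1 by norm_num)] with x hx
    simp only [Set.mem_Ioc, eq_iff_iff]
    have hx' : (0:ℝ) < x := hx
    constructor
    · rintro ⟨_, h2⟩; exact ⟨hx', h2⟩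
    · rintro ⟨h1, h2⟩; exact ⟨by linarith, h2⟩
  have hcum' : ∀ θ ∈ Θ, ∀ i : Fin r,
      iteratedDerivWithin (i.1 + 1) (fun t => Real.log (Φ t θ)) (Set.Ioc (0:ℝ) 1) 1
        = θ i := by
    intro θ hθ i
    rw [← iteratedDerivWithin_congr_set' hsetEq]
    exact hcum θ hθ i
  have hmapIoc : ∀ p ∈ Set.Ioc (0:ℝ) 1, ∀ t ∈ Set.Ioc (0:ℝ) 1,
      (1 - p + p * t) ∈ Set.Ioc (0:ℝ) 1 := by
    intro p hp t ht
    constructor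
    · nlinarith [hp.1, hp.2, ht.1, ht.2]
    · nlinarith [hp.1, hp.2, ht.1, ht.2]
  -- thinning: the new parameter is the diagonal scaling
  have hthin' : ∀ θ ∈ Θ, ∀ p : ℝ, ∀ hp : p ∈ Set.Ioc (0:ℝ) 1, ∃ θ' ∈ Θ,
      (∀ i : Fin r, θ' i = p^(i.1+1) * θ i) ∧
      (∀ t ∈ Set.Ioc (0:ℝ) 1, Φ t θ' = Φ (1 - p + p * t) θ) := by
    intro θ hθ p hp
    obtain ⟨θ', hθ', heq⟩ := hthin θ hθ p hp
    have hpgf : ∀ t ∈ Set.Ioc (0:ℝ) 1, Φ t θ' = Φ (1 - p + p * t) θ := by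
      intro t ht
      rw [hΦ _ hθ' t (hsub ht), hΦ _ hθ _ (hsub (hmapIoc p hp t ht)), ← heq]
      exact (thin_pgf (hpmf θ hθ) hp.1 hp.2 ht.1 ht.2).2
    refine ⟨θ', hθ', ?_, hpgf⟩
    intro i
    have h1 : θ' i = iteratedDerivWithin (i.1+1) (fun t => Real.log (Φ t θ'))
        (Set.Ioc (0:ℝ) 1) 1 := (hcum' θ' hθ' i).symm
    have h2 : Set.EqOn (fun t => Real.log (Φ t θ'))
        (fun t => Real.log (Φ (1 - p + p * t) θ)) (Set.Ioc (0:ℝ) 1) := by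
      intro t ht
      simp only
      rw [hpgf t ht]
    have h3 := (iteratedDerivWithin_congr (n := i.1+1) h2) hone
    have h4 := iteratedDerivWithin_comp_affine huniq (hLsmooth θ hθ)
      (a := 1 - p) (p := p) (fun x hx => hmapIoc p hp x hx) (i.1+1) 1 hone
    rw [show (1:ℝ) - p + p * 1 = 1 by ring] at h4
    rw [h1, h3, h4, hcum' θ hθ i]
  -- the scaling relation for the coefficients
  have hArel : ∀ t ∈ Set.Ioc (0:ℝ) 1, ∀ p : ℝ, ∀ hp : p ∈ Set.Ioc (0:ℝ) 1,
      ∀ i, A (1 - p + p * t) i = p^(i.1+1) * A t i := by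
    intro t ht p hp
    have hforms : ∀ θ ∈ Θ, ∑ i, A (1 - p + p * t) i * θ i
        = ∑ i, (p^(i.1+1) * A t i) * θ i := by
      intro θ hθ
      obtain ⟨θ', hθ'Θ, hθ'i, hpgf⟩ := hthin' θ hθ p hp
      calc ∑ i, A (1 - p + p * t) i * θ i
          = Real.log (Φ (1 - p + p * t) θ) := (hA _ (hmapIoc p hp t ht) θ hθ).symm
      _ = Real.log (Φ t θ') := by rw [hpgf t ht]
      _ = ∑ i, A t i * θ' i := hA t ht θ' hθ'Θ
      _ = ∑ i, (p^(i.1+1) * A t i) * θ i := by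
          apply Finset.sum_congr rfl
          intro i _
          rw [hθ'i i]; ring
    have h := linear_forms_eq hopen hθbase hforms
    exact fun i => congrFun h i
  -- homogeneity: A t i = A (1/2) i * (2(1-t))^(i+1)
  have hAhomog : ∀ t ∈ Set.Ioc (0:ℝ) 1, ∀ i : Fin r,
      A t i = A (1/2) i * (2*(1-t))^(i.1+1) := by
    intro t ht i
    rcases eq_or_lt_of_le ht.2 with h1 | h1
    · subst h1
      rw [hA1 i]
      rw [show (2*((1:ℝ)-1)) = 0 by ring, zero_pow (by omega : i.1+1 ≠ 0)]
      ring
    · rcases le_or_gt (1/2 : ℝ) t with h2 | h2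
      · set p := 2*(1-t) with hpdef
        have hpmem : p ∈ Set.Ioc (0:ℝ) 1 := ⟨by nlinarith, by nlinarith⟩
        have h3 := hArel (1/2) hhalf p hpmem i
        rw [show (1:ℝ) - p + p * (1/2) = t by rw [hpdef]; ring] at h3
        rw [h3]; ring
      · set p := 1/(2*(1-t)) with hpdef
        have h1t : (0:ℝ) < 1 - t := by linarith
        have hpmem : p ∈ Set.Ioc (0:ℝ) 1 := by
          constructor
          · rw [hpdef]; positivity
          · rw [hpdef, div_le_one (by positivity)]; linarith
        have h3 := hArel t ht p hpmem i
        rw [show (1:ℝ) - p + p * t = 1/2 by rw [hpdef]; field_simp; ring] at h3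
        have hcancel : p * (2*(1-t)) = 1 := by rw [hpdef]; field_simp
        have hpow : p^(i.1+1) * (2*(1-t))^(i.1+1) = 1 := by
          rw [← mul_pow, hcancel, one_pow]
        calc A t i = (p^(i.1+1) * (2*(1-t))^(i.1+1)) * A t i := by rw [hpow, one_mul]
        _ = (p^(i.1+1) * A t i) * (2*(1-t))^(i.1+1) := by ring
        _ = A (1/2) i * (2*(1-t))^(i.1+1) := by rw [← h3]
  -- the monomial coefficients
  set c : Fin r → ℝ := fun i => A (1/2) i * (-2:ℝ)^(i.1+1) with hcdef
  have hApoly : ∀ t ∈ Set.Ioc (0:ℝ) 1, ∀ i : Fin r, A t i = c i * (t-1)^(i.1+1) := by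
    intro t ht i
    rw [hAhomog t ht i, hcdef]
    simp only
    rw [show ((2:ℝ)*(1-t))^(i.1+1) = (-2:ℝ)^(i.1+1) * (t-1)^(i.1+1) by
      rw [← mul_pow]; congr 1; ring]
    ring
  have hLpoly : ∀ θ ∈ Θ, ∀ t ∈ Set.Ioc (0:ℝ) 1,
      Real.log (Φ t θ) = ∑ i, (c i * θ i) * (t - 1)^(i.1+1) := by
    intro θ hθ t ht
    rw [hA t ht θ hθ]
    apply Finset.sum_congr rfl
    intro i _
    rw [hApoly t ht i]; ring
  -- identify c i = 1/(i+1)! via the cumulants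
  have hfactval : ∀ θ ∈ Θ, ∀ i : Fin r,
      θ i = ((i.1+1).factorial : ℝ) * (c i * θ i) := by
    intro θ hθ i
    have h1 := hcum' θ hθ i
    have h2 : Set.EqOn (fun t => Real.log (Φ t θ))
        (fun t => ∑ j : Fin r, (c j * θ j) * (t - 1)^(j.1+1)) (Set.Ioc (0:ℝ) 1) :=
      fun t ht => hLpoly θ hθ t ht
    have h3 := (iteratedDerivWithin_congr (n := i.1+1) h2) hone
    have h4 := iteratedDerivWithin_poly (fun j : Fin r => c j * θ j)
      (fun j : Fin r => j.1+1) huniq (i.1+1) 1 hone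
    have h34 : iteratedDerivWithin (i.1+1) (fun t => Real.log (Φ t θ)) (Set.Ioc (0:ℝ) 1) 1
        = ∑ j : Fin r, (c j * θ j) * (((j.1+1).descFactorial (i.1+1) : ℕ) : ℝ)
            * ((1:ℝ) - 1)^((j.1+1) - (i.1+1)) := by
      rw [h3]
      exact h4
    have h5 : (∑ j : Fin r, (c j * θ j) * (((j.1+1).descFactorial (i.1+1) : ℕ) : ℝ)
          * ((1:ℝ) - 1)^((j.1+1) - (i.1+1)))
        = ((i.1+1).factorial : ℝ) * (c i * θ i) := by
      rw [Finset.sum_eq_single i]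
      · rw [Nat.descFactorial_self, Nat.sub_self, pow_zero]
        ring
      · intro j _ hji
        have hne2 : j.1 + 1 ≠ i.1 + 1 := by
          intro h
          exact hji (Fin.ext (by omega))
        rcases lt_or_gt_of_ne hne2 with hlt | hgt
        · rw [Nat.descFactorial_eq_zero_iff_lt.mpr (by omega)]
          simp
        · rw [show ((1:ℝ) - 1) = 0 by ring, zero_pow (by omega : j.1+1 - (i.1+1) ≠ 0)]
          ring
      · intro h
        exact absurd (Finset.mem_univ i) h
    exact (hcum' θ hθ i).symm.trans (h34.trans h5)
  have hcval : ∀ i : Fin r, c i = 1/((i.1+1).factorial : ℝ) := by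
    intro i
    have hforms : ∀ θ ∈ Θ,
        ∑ j, (if j = i then (1 - ((i.1+1).factorial : ℝ) * c i) else 0) * θ j
          = ∑ j, (0:ℝ) * θ j := by
      intro θ hθ
      have hsplit : ∀ j : Fin r,
          (if j = i then (1 - ((i.1+1).factorial : ℝ) * c i) else 0) * θ j
            = if j = i then (1 - ((i.1+1).factorial : ℝ) * c i) * θ j else 0 := by
        intro j
        split <;> simp
      rw [Finset.sum_congr rfl (fun j _ => hsplit j),
        Finset.sum_ite_eq' Finset.univ i
          (fun j => (1 - ((i.1+1).factorial : ℝ) * c i) * θ j)]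
      simp only [Finset.mem_univ, if_true, zero_mul, Finset.sum_const_zero]
      linear_combination hfactval θ hθ i
    have h := linear_forms_eq hopen hθbase hforms
    have h2 := congrFun h i
    simp only [eq_self_iff_true, if_true] at h2
    have hfact : ((i.1+1).factorial : ℝ) ≠ 0 := by
      exact_mod_cast Nat.factorial_ne_zero (i.1+1)
    rw [eq_div_iff hfact]
    linear_combination -h2
  -- the formula on (0, 1]
  intro θ hθ t ht
  have hfin : ∀ u ∈ Set.Ioc (0:ℝ) 1, Φ u θ
      = Real.exp (∑ i : Fin r, θ i * (u - 1)^(i.1+1) / ((i.1+1).factorial : ℝ)) := by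
    intro u hu
    rw [← Real.exp_log (hpos θ hθ u hu), hLpoly θ hθ u hu]
    congr 1
    apply Finset.sum_congr rfl
    intro i _
    rw [hcval i]
    have hfact : ((i.1+1).factorial : ℝ) ≠ 0 := by
      exact_mod_cast Nat.factorial_ne_zero (i.1+1)
    field_simp
  rcases lt_or_ge 0 t with hposT | hnegT
  · exact hfin t ⟨hposT, ht.2⟩
  -- analytic continuation to (-1, 0]
  · set F : ℝ → ℝ := fun x => ∑' n, f θ n * x^n with hFdef
    set G : ℝ → ℝ := fun x =>
      Real.exp (∑ i : Fin r, θ i * (x - 1)^(i.1+1) / ((i.1+1).factorial : ℝ)) with hGdef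
    have hradius : 1 ≤ (FormalMultilinearSeries.ofScalars ℝ (f θ)).radius := by
      have hb := FormalMultilinearSeries.le_radius_of_bound
        (p := FormalMultilinearSeries.ofScalars ℝ (f θ)) 1 (r := 1) ?_
      · simpa using hb
      · intro n
        rw [FormalMultilinearSeries.ofScalars_norm]
        simp only [NNReal.coe_one, one_pow, mul_one]
        rw [Real.norm_eq_abs, abs_of_nonneg ((hpmf θ hθ).1 n)]
        exact (hpmf θ hθ).le_one n
    have hposrad : 0 < (FormalMultilinearSeries.ofScalars ℝ (f θ)).radius :=
      lt_of_lt_of_le (by norm_num) hradius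
    have hball := (FormalMultilinearSeries.ofScalars ℝ (f θ)).hasFPowerSeriesOnBall hposrad
    have hFeq : (FormalMultilinearSeries.ofScalars ℝ (f θ)).sum = F := by
      funext x
      have h1 : (FormalMultilinearSeries.ofScalars ℝ (f θ)).sum x
          = FormalMultilinearSeries.ofScalarsSum (f θ) x := rfl
      rw [h1, FormalMultilinearSeries.ofScalars_sum_eq, hFdef]
      simp [smul_eq_mul]
    have hFanal : AnalyticOnNhd ℝ F (Metric.ball (0:ℝ) 1) := by
      intro x hx
      have hx' : edist x (0:ℝ) < (FormalMultilinearSeries.ofScalars ℝ (f θ)).radius := by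
        apply lt_of_lt_of_le _ hradius
        rw [edist_dist, ← ENNReal.ofReal_one]
        exact (ENNReal.ofReal_lt_ofReal_iff (by norm_num)).mpr (Metric.mem_ball.mp hx)
      have hx'' : x ∈ EMetric.ball (0:ℝ) (FormalMultilinearSeries.ofScalars ℝ (f θ)).radius :=
        hx'
      have h5 := hball.analyticAt_of_mem (y := x) hx'
      rwa [hFeq] at h5
    have hGanal : AnalyticOnNhd ℝ G (Metric.ball (0:ℝ) 1) := by
      have hpoly : AnalyticOnNhd ℝ
          (fun x : ℝ => ∑ i : Fin r, θ i * (x - 1)^(i.1+1) / ((i.1+1).factorial : ℝ))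
          (Metric.ball (0:ℝ) 1) := by
        apply Finset.analyticOnNhd_fun_sum
        intro i _
        have heq : (fun x : ℝ => θ i * (x - 1)^(i.1+1) / ((i.1+1).factorial : ℝ))
            = fun x : ℝ => (θ i / ((i.1+1).factorial : ℝ)) * (x - 1)^(i.1+1) := by
          funext x; ring
        rw [heq]
        exact (analyticOnNhd_const).mul
          (((analyticOnNhd_id).sub analyticOnNhd_const).pow _)
      exact hpoly.rexp
    have hpre : IsPreconnected (Metric.ball (0:ℝ) 1) := (convex_ball _ _).isPreconnected
    have hmemhalf : (1/2:ℝ) ∈ Metric.ball (0:ℝ) 1 := by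
      rw [Metric.mem_ball, dist_zero_right, Real.norm_eq_abs]
      rw [abs_of_pos (by norm_num : (0:ℝ) < 1/2)]
      norm_num
    have hev : F =ᶠ[nhds (1/2:ℝ)] G := by
      filter_upwards [isOpen_Ioo.mem_nhds (show (1/2:ℝ) ∈ Set.Ioo (0:ℝ) 1 by
        constructor <;> norm_num)] with x hx
      have hxs : x ∈ Set.Ioc (0:ℝ) 1 := ⟨hx.1, le_of_lt hx.2⟩
      rw [hFdef, hGdef]
      simp only
      rw [← hΦ θ hθ x (hsub hxs)]
      exact hfin x hxs
    have hEq := hFanal.eqOn_of_preconnected_of_eventuallyEq hGanal hpre hmemhalf hev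
    have htball : t ∈ Metric.ball (0:ℝ) 1 := by
      rw [Metric.mem_ball, dist_zero_right, Real.norm_eq_abs, abs_lt]
      exact ⟨ht.1, by linarith⟩
    have hFG := hEq htball
    rw [hΦ θ hθ t ht]
    exact hFG
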